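/- Let φ, ψ be structural sets in ℝ_{0,m} and f: Ω → ℝ_{0,m} C²-smooth. Then φ∂[Ψ₊^{φ,ψ}(f)]ψ∂ = Ψ₋^{φ,ψ}(Δf) and φ∂[Ψ₋^{φ,ψ}(f)]ψ∂ = Ψ₊^{φ,ψ}(Δf). -/

import Mathlib

open CliffordAlgebra
open scoped symmDiff

noncomputable section

/-- The quadratic form of `ℝ_{0,m}`: negative definite on `ℝ^m`. -/
abbrev Qf (m : ℕ) : QuadraticForm ℝ (Fin m → ℝ) :=
  QuadraticMap.weightedSumSquares ℝ (fun _ : Fin m => (-1 : ℝ))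

/-- The real Clifford algebra `ℝ_{0,m}`. -/
abbrev Cl (m : ℕ) := CliffordAlgebra (Qf m)

/-- A structural set: an orthonormal basis `ψ¹,…,ψᵐ` of `ℝᵐ`. -/
def IsStructuralSet {m : ℕ} (ψ : Fin m → (Fin m → ℝ)) : Prop :=
  ∀ i j, (∑ t, ψ i t * ψ j t) = if i = j then (1 : ℝ) else 0

/-- The ordered product `ψ_A = ψ^{j₁} ⋯ ψ^{j_k}` for `A = {j₁ < ⋯ < j_k}`. -/
def prodS {m : ℕ} (ψ : Fin m → (Fin m → ℝ)) (A : Finset (Fin m)) : Cl m :=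
  ((A.sort (· ≤ ·)).map (fun i => ι (Qf m) (ψ i))).prod

/-- The operator `Ψ_k^{φ,ψ}(a) = Σ_{|A|=k} φ_A a ψ̂_A`. -/
def PsiK {m : ℕ} (φ ψ : Fin m → (Fin m → ℝ)) (k : ℕ) (a : Cl m) : Cl m :=
  ∑ A ∈ Finset.univ.filter (fun A : Finset (Fin m) => A.card = k),
    prodS φ A * a * reverse (prodS ψ A)

/-- `Ψ₊ = Σ_{k even} Ψ_k`. -/
def PsiPlus {m : ℕ} (φ ψ : Fin m → (Fin m → ℝ)) (a : Cl m) : Cl m :=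
  ∑ k ∈ (Finset.range (m + 1)).filter (fun k => Even k), PsiK φ ψ k a

/-- `Ψ₋ = Σ_{k odd} Ψ_k`. -/
def PsiMinus {m : ℕ} (φ ψ : Fin m → (Fin m → ℝ)) (a : Cl m) : Cl m :=
  ∑ k ∈ (Finset.range (m + 1)).filter (fun k => Odd k), PsiK φ ψ k a

/-- `Ψ₁^{φ,ψ}(a) = Σⱼ φʲ a ψʲ`. -/
def Psi1 {m : ℕ} (φ ψ : Fin m → (Fin m → ℝ)) (a : Cl m) : Cl m :=
  ∑ j, ι (Qf m) (φ j) * a * ι (Qf m) (ψ j)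

/-- The standard basis of `ℝᵐ`. -/
def stdB {m : ℕ} (i : Fin m) : Fin m → ℝ := Pi.single i 1

/-- The basis multivector `e_A`. -/
def eA {m : ℕ} (A : Finset (Fin m)) : Cl m := prodS stdB A

/-- The element with coefficients `c` in the multivector basis. -/
def toCl {m : ℕ} (c : Finset (Fin m) → ℝ) : Cl m := ∑ A, c A • eA A

/-- The space `ℝ_{0,m}^{(k)}` of `k`-grade multivectors. -/
def gradeK (m k : ℕ) : Submodule ℝ (Cl m) :=
  Submodule.span ℝ {x | ∃ A : Finset (Fin m), A.card = k ∧ x = eA A}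

/-- Coefficient functions of `ℝ_{0,m}`-valued maps. -/
abbrev Coef (m : ℕ) := Finset (Fin m) → ℝ

/-- The coefficients of the even part `f₊`. -/
def cEven {m : ℕ} (c : Coef m) : Coef m := fun A => if Even A.card then c A else 0

/-- The coefficients of the odd part `f₋`. -/
def cOdd {m : ℕ} (c : Coef m) : Coef m := fun A => if Odd A.card then c A else 0

/-- The even part of a Clifford number. -/
def evenPart {m : ℕ} (a : Cl m) : Cl m :=
  (DirectSum.decompose (evenOdd (Qf m)) a 0 : evenOdd (Qf m) 0)

/-- The odd part of a Clifford number. -/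
def oddPart {m : ℕ} (a : Cl m) : Cl m :=
  (DirectSum.decompose (evenOdd (Qf m)) a 1 : evenOdd (Qf m) 1)

/-- Partial derivative `∂F/∂xᵢ` of a coefficient function. -/
def pd {m : ℕ} (i : Fin m) (F : (Fin m → ℝ) → Coef m) : (Fin m → ℝ) → Coef m :=
  fun x => fderiv ℝ F x (Pi.single i 1)

/-- The sandwich operator `φ∂[f]ψ∂ = Σᵢⱼ φⁱ (∂²f/∂xᵢ∂xⱼ) ψʲ` for `f = Σ_A F_A e_A`. -/
def sandwichD {m : ℕ} (φ ψ : Fin m → (Fin m → ℝ)) (F : (Fin m → ℝ) → Coef m)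
    (x : Fin m → ℝ) : Cl m :=
  ∑ i, ∑ j, ι (Qf m) (φ i) * toCl (pd i (pd j F) x) * ι (Qf m) (ψ j)

/-- The operator `φ∂[ψ∂[f]] = Σᵢⱼ φⁱ ψʲ ∂²f/∂xᵢ∂xⱼ`. -/
def ddD {m : ℕ} (φ ψ : Fin m → (Fin m → ℝ)) (F : (Fin m → ℝ) → Coef m)
    (x : Fin m → ℝ) : Cl m :=
  ∑ i, ∑ j, ι (Qf m) (φ i) * (ι (Qf m) (ψ j) * toCl (pd i (pd j F) x))

/-- The componentwise Laplacian `Δf = Σᵢ ∂²f/∂xᵢ²`. -/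
def lapD {m : ℕ} (F : (Fin m → ℝ) → Coef m) (x : Fin m → ℝ) : Cl m :=
  ∑ i, toCl (pd i (pd i F) x)


-- basic quadratic form facts
lemma Qf_apply {m : ℕ} (v : Fin m → ℝ) : Qf m v = -∑ t, v t * v t := by
  rw [QuadraticMap.weightedSumSquares_apply]
  simp [neg_mul, Finset.sum_neg_distrib]

lemma iota_sq {m : ℕ} {φ : Fin m → Fin m → ℝ} (hφ : IsStructuralSet φ) (i : Fin m) :
    ι (Qf m) (φ i) * ι (Qf m) (φ i) = -1 := by
  rw [ι_sq_scalar, Qf_apply]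
  have := hφ i i
  rw [if_pos rfl] at this
  rw [this]
  simp

lemma iota_anticomm {m : ℕ} {φ : Fin m → Fin m → ℝ} (hφ : IsStructuralSet φ) {i j : Fin m}
    (h : i ≠ j) :
    ι (Qf m) (φ i) * ι (Qf m) (φ j) = -(ι (Qf m) (φ j) * ι (Qf m) (φ i)) := by
  have hsw := ι_mul_ι_add_swap (Q := Qf m) (φ i) (φ j)
  have hp : QuadraticMap.polar (Qf m) (φ i) (φ j) = 0 := by
    have e3 := hφ i j; rw [if_neg h] at e3
    simp only [QuadraticMap.polar, Qf_apply]
    have : ∀ t, (φ i t + φ j t) * (φ i t + φ j t)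
        = φ i t * φ i t + φ j t * φ j t + 2 * (φ i t * φ j t) := by intro t; ring
    simp only [Pi.add_apply, this, Finset.sum_add_distrib]
    rw [← Finset.mul_sum, e3]
    ring
  rw [hp, map_zero] at hsw
  exact eq_neg_of_add_eq_zero_left hsw

-- chunk 2: prodS and symmDiff basics
lemma prodS_empty {m : ℕ} (φ : Fin m → Fin m → ℝ) : prodS φ ∅ = 1 := by simp [prodS]

lemma prodS_singleton {m : ℕ} (φ : Fin m → Fin m → ℝ) (i : Fin m) :
    prodS φ {i} = ι (Qf m) (φ i) := by simp [prodS]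

lemma prodS_insert {m : ℕ} (φ : Fin m → Fin m → ℝ) {a : Fin m} {A : Finset (Fin m)}
    (h : ∀ b ∈ A, a < b) (ha : a ∉ A) :
    prodS φ (insert a A) = ι (Qf m) (φ a) * prodS φ A := by
  unfold prodS
  rw [Finset.sort_insert (· ≤ ·) (fun b hb => (h b hb).le) ha]
  simp

lemma symmDiff_singleton_not_mem {m : ℕ} {A : Finset (Fin m)} {i : Fin m} (h : i ∉ A) :
    A ∆ {i} = insert i A := by
  ext x
  by_cases hx : x = i <;> simp [Finset.mem_symmDiff, hx, h]

lemma symmDiff_singleton_mem {m : ℕ} {A : Finset (Fin m)} {i : Fin m} (h : i ∈ A) :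
    A ∆ {i} = A.erase i := by
  ext x
  by_cases hx : x = i <;> simp [Finset.mem_symmDiff, hx, h]

lemma pair_symmDiff_right {m : ℕ} {i j : Fin m} (h : i ≠ j) :
    ({i, j} : Finset (Fin m)) ∆ {j} = {i} := by
  ext x
  by_cases hx : x = i <;> by_cases hx' : x = j <;>
    simp [Finset.mem_symmDiff, hx, hx', h] <;> tauto

lemma symmDiff_pair_first {m : ℕ} {i j : Fin m} (h : i ≠ j) (A : Finset (Fin m)) :
    (A ∆ {i, j}) ∆ {j} = A ∆ {i} := by
  rw [symmDiff_assoc, pair_symmDiff_right h]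

lemma symmDiff_pair_second {m : ℕ} {i j : Fin m} (h : i ≠ j) (A : Finset (Fin m)) :
    (A ∆ {i, j}) ∆ {i} = A ∆ {j} := by
  rw [Finset.pair_comm, symmDiff_assoc, pair_symmDiff_right h.symm]

lemma card_symmDiff_singleton {m : ℕ} (A : Finset (Fin m)) (i : Fin m) :
    (A ∆ {i}).card % 2 = (A.card + 1) % 2 := by
  by_cases h : i ∈ A
  · rw [symmDiff_singleton_mem h, Finset.card_erase_of_mem h]
    have : 1 ≤ A.card := Finset.card_pos.mpr ⟨i, h⟩
    omega
  · rw [symmDiff_singleton_not_mem h, Finset.card_insert_of_notMem h]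

lemma card_symmDiff_pair {m : ℕ} {i j : Fin m} (h : i ≠ j) (A : Finset (Fin m)) :
    (A ∆ {i, j}).card % 2 = A.card % 2 := by
  have h1 : ((A ∆ {i, j}) ∆ {j}).card % 2 = ((A ∆ {i,j}).card + 1) % 2 :=
    card_symmDiff_singleton _ _
  rw [symmDiff_pair_first h, card_symmDiff_singleton] at h1
  omega

-- chunk 3: the sign function
def sg {m : ℕ} (i : Fin m) (A : Finset (Fin m)) : ℝ :=
  (if i ∈ A then -1 else 1) * (-1) ^ (A.filter (· < i)).card

lemma neg_one_pow_mod (n : ℕ) : ((-1 : ℝ)) ^ n = (-1) ^ (n % 2) := by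
  conv_lhs => rw [← Nat.div_add_mod n 2]
  rw [pow_add, pow_mul]
  norm_num

lemma neg_one_pow_congr' {a b : ℕ} (h : a % 2 = b % 2) : ((-1 : ℝ)) ^ a = (-1) ^ b := by
  rw [neg_one_pow_mod a, neg_one_pow_mod b, h]

lemma sg_sq {m : ℕ} (i : Fin m) (A : Finset (Fin m)) : sg i A * sg i A = 1 := by
  unfold sg
  rw [mul_mul_mul_comm, ← pow_add]
  have h1 : ((if i ∈ A then (-1 : ℝ) else 1) * if i ∈ A then -1 else 1) = 1 := by
    split <;> norm_num
  have h2 : ((-1 : ℝ)) ^ ((A.filter (· < i)).card + (A.filter (· < i)).card) = 1 := by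
    rw [neg_one_pow_mod]
    have : ((A.filter (· < i)).card + (A.filter (· < i)).card) % 2 = 0 := by omega
    rw [this, pow_zero]
  rw [h1, h2, one_mul]

lemma filter_symmDiff' {m : ℕ} (p : Fin m → Prop) [DecidablePred p] (A B : Finset (Fin m)) :
    (A ∆ B).filter p = (A.filter p) ∆ (B.filter p) := by
  ext x
  simp only [Finset.mem_filter, Finset.mem_symmDiff]
  tauto

lemma pair_filter_lt {m : ℕ} {i j : Fin m} (h : i ≠ j) :
    ({i, j} : Finset (Fin m)).filter (· < i) = if j < i then {j} else ∅ := by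
  rw [Finset.filter_insert, if_neg (lt_irrefl i), Finset.filter_singleton]

lemma sg_symmDiff_pair_same {m : ℕ} {i j : Fin m} (h : i ≠ j) (A : Finset (Fin m)) :
    sg i (A ∆ {i, j}) * sg i A = if j < i then 1 else -1 := by
  have hmem : (i ∈ A ∆ {i, j}) ↔ i ∉ A := by
    simp [Finset.mem_symmDiff]
  have hcard : ((A ∆ {i, j}).filter (· < i)).card % 2
      = ((A.filter (· < i)).card + if j < i then 1 else 0) % 2 := by
    rw [filter_symmDiff', pair_filter_lt h]
    by_cases hj : j < i
    · rw [if_pos hj, if_pos hj]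
      have := card_symmDiff_singleton (A.filter (· < i)) j
      omega
    · rw [if_neg hj, if_neg hj]
      have : Finset.filter (· < i) A ∆ (∅ : Finset (Fin m)) = Finset.filter (· < i) A := by
        ext x; simp [Finset.mem_symmDiff]
      rw [this, Nat.add_zero]
  unfold sg
  rw [mul_mul_mul_comm, ← pow_add]
  have h1 : ((if i ∈ A ∆ {i, j} then (-1 : ℝ) else 1) * if i ∈ A then -1 else 1) = -1 := by
    by_cases hiA : i ∈ A
    · rw [if_pos hiA, if_neg (fun hc => (hmem.mp hc) hiA)]; norm_num
    · rw [if_neg hiA, if_pos (hmem.mpr hiA)]; norm_num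
  have h2 : ((-1 : ℝ)) ^ (((A ∆ {i, j}).filter (· < i)).card + (A.filter (· < i)).card)
      = (-1) ^ (if j < i then 1 else 0) := by
    apply neg_one_pow_congr'
    by_cases hj : j < i <;> simp [hj] at hcard ⊢ <;> omega
  rw [h1, h2]
  by_cases hj : j < i <;> simp [hj]

lemma sg_symmDiff_pair {m : ℕ} {i j : Fin m} (h : i ≠ j) (A : Finset (Fin m)) :
    sg i (A ∆ {i, j}) * sg j (A ∆ {i, j}) = -(sg i A * sg j A) := by
  have h1 := sg_symmDiff_pair_same h A
  have h2 := sg_symmDiff_pair_same h.symm A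
  rw [Finset.pair_comm j i] at h2
  have key : (sg i (A ∆ {i, j}) * sg j (A ∆ {i, j})) * (sg i A * sg j A) = -1 := by
    have : (sg i (A ∆ {i, j}) * sg j (A ∆ {i, j})) * (sg i A * sg j A)
        = (sg i (A ∆ {i, j}) * sg i A) * (sg j (A ∆ {i, j}) * sg j A) := by ring
    rw [this, h1, h2]
    rcases h.lt_or_gt with hij | hij
    · rw [if_neg (asymm hij), if_pos hij]; norm_num
    · rw [if_pos hij, if_neg (asymm hij)]; norm_num
  have hsq : (sg i A * sg j A) * (sg i A * sg j A) = 1 := by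
    have := sg_sq i A; have := sg_sq j A
    nlinarith [sg_sq i A, sg_sq j A]
  have h0 : (sg i A * sg j A) ≠ 0 := by
    intro hc; rw [hc, mul_zero] at hsq; norm_num at hsq
  apply mul_right_cancel₀ h0
  rw [key, neg_mul, hsq]

-- chunk 4: multiplying prodS by a generator
lemma sg_empty {m : ℕ} (i : Fin m) : sg i ∅ = 1 := by simp [sg]

lemma iota_mul_prodS {m : ℕ} {φ : Fin m → Fin m → ℝ} (hφ : IsStructuralSet φ)
    (A : Finset (Fin m)) (i : Fin m) :
    ι (Qf m) (φ i) * prodS φ A = sg i A • prodS φ (A ∆ {i}) := by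
  induction A using Finset.induction_on_min with
  | empty =>
    rw [prodS_empty, mul_one, sg_empty, one_smul]
    have : (∅ : Finset (Fin m)) ∆ {i} = {i} := by
      ext x; simp [Finset.mem_symmDiff]
    rw [this, prodS_singleton]
  | insert a s hlt ih =>
    have has : a ∉ s := fun hc => lt_irrefl a (hlt a hc)
    rw [prodS_insert φ hlt has]
    rcases eq_or_ne i a with rfl | hia
    · -- i = a
      rw [← mul_assoc, iota_sq hφ]
      have hmem : i ∈ insert i s := Finset.mem_insert_self i s
      have hsd : (insert i s) ∆ {i} = s := by
        rw [symmDiff_singleton_mem hmem, Finset.erase_insert has]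
      have hsg : sg i (insert i s) = -1 := by
        unfold sg
        rw [if_pos hmem]
        have : (insert i s).filter (· < i) = ∅ := by
          rw [Finset.filter_insert, if_neg (lt_irrefl i)]
          rw [Finset.filter_eq_empty_iff]
          exact fun b hb => not_lt_of_gt (hlt b hb)
        rw [this]
        simp
      rw [hsd, hsg]
      simp
    · rcases hia.lt_or_gt with hlt' | hlt'
      · -- i < a
        have hi : i ∉ insert a s := by
          intro hc
          rcases Finset.mem_insert.mp hc with rfl | hc
          · exact lt_irrefl i hlt'
          · exact lt_irrefl i (hlt'.trans (hlt i hc))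
        have hsd : (insert a s) ∆ {i} = insert i (insert a s) :=
          symmDiff_singleton_not_mem hi
        have hsg : sg i (insert a s) = 1 := by
          unfold sg
          rw [if_neg hi]
          have : (insert a s).filter (· < i) = ∅ := by
            rw [Finset.filter_eq_empty_iff]
            intro b hb
            rcases Finset.mem_insert.mp hb with rfl | hb
            · exact not_lt_of_gt hlt'
            · exact not_lt_of_gt (hlt'.trans (hlt b hb))
          rw [this]
          simp
        have hall : ∀ b ∈ insert a s, i < b := by
          intro b hb
          rcases Finset.mem_insert.mp hb with rfl | hb
          · exact hlt'
          · exact hlt'.trans (hlt b hb)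
        rw [hsd, hsg, one_smul, ← prodS_insert φ hlt has, prodS_insert φ hall hi]
      · -- a < i
        have hi : i ∈ insert a s ↔ i ∈ s := by
          rw [Finset.mem_insert]
          exact ⟨fun h => h.resolve_left hia, Or.inr⟩
        have hsg : sg i (insert a s) = -sg i s := by
          unfold sg
          have hmem : (if i ∈ insert a s then (-1:ℝ) else 1) = if i ∈ s then -1 else 1 := by
            by_cases hc : i ∈ s
            · rw [if_pos hc, if_pos (hi.mpr hc)]
            · rw [if_neg hc, if_neg (fun hh => hc (hi.mp hh))]
          have hfil : (insert a s).filter (· < i) = insert a (s.filter (· < i)) := by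
            rw [Finset.filter_insert, if_pos hlt']
          have hcard : ((insert a s).filter (· < i)).card = (s.filter (· < i)).card + 1 := by
            rw [hfil, Finset.card_insert_of_notMem (fun hc => has (Finset.mem_of_mem_filter a hc))]
          rw [hmem, hcard, pow_succ]
          ring
        have hai : a ≠ i := fun hh => hia hh.symm
        have hsd : (insert a s) ∆ {i} = insert a (s ∆ {i}) := by
          ext x
          by_cases h1 : x = a <;> by_cases h2 : x = i <;>
            simp [Finset.mem_symmDiff, h1, h2, hai, hia, has] <;> tauto
        rw [← mul_assoc, iota_anticomm hφ hia, neg_mul, mul_assoc, ih, hsg]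
        have hlt'' : ∀ b ∈ s ∆ {i}, a < b := by
          intro b hb
          rw [Finset.mem_symmDiff] at hb
          rcases hb with ⟨hb, _⟩ | ⟨hb, _⟩
          · exact hlt b hb
          · rw [Finset.mem_singleton] at hb; exact hb ▸ hlt'
        have hna : a ∉ s ∆ {i} := fun hc => lt_irrefl a (hlt'' a hc)
        rw [hsd, prodS_insert φ hlt'' hna]
        rw [mul_smul_comm, neg_smul]

-- chunk 5: reverse version and the conjugation identity
lemma revProdS_mul_iota {m : ℕ} {ψ : Fin m → Fin m → ℝ} (hψ : IsStructuralSet ψ)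
    (A : Finset (Fin m)) (j : Fin m) :
    reverse (Q := Qf m) (prodS ψ A) * ι (Qf m) (ψ j)
      = sg j A • reverse (Q := Qf m) (prodS ψ (A ∆ {j})) := by
  have h := congrArg (reverse (Q := Qf m)) (iota_mul_prodS hψ A j)
  rw [reverse.map_mul, reverse_ι, map_smul] at h
  exact h

lemma conj_term {m : ℕ} {φ ψ : Fin m → Fin m → ℝ} (hφ : IsStructuralSet φ)
    (hψ : IsStructuralSet ψ) (i j : Fin m) (A : Finset (Fin m)) (x : Cl m) :
    ι (Qf m) (φ i) * (prodS φ A * x * reverse (Q := Qf m) (prodS ψ A)) * ι (Qf m) (ψ j)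
      = (sg i A * sg j A) •
        (prodS φ (A ∆ {i}) * x * reverse (Q := Qf m) (prodS ψ (A ∆ {j}))) := by
  have e1 := iota_mul_prodS hφ A i
  have e2 := revProdS_mul_iota hψ A j
  calc ι (Qf m) (φ i) * (prodS φ A * x * reverse (Q := Qf m) (prodS ψ A)) * ι (Qf m) (ψ j)
      = (ι (Qf m) (φ i) * prodS φ A) * x *
        (reverse (Q := Qf m) (prodS ψ A) * ι (Qf m) (ψ j)) := by
        simp only [mul_assoc]
    _ = (sg i A • prodS φ (A ∆ {i})) * x *
        (sg j A • reverse (Q := Qf m) (prodS ψ (A ∆ {j}))) := by rw [e1, e2]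
    _ = (sg i A * sg j A) •
        (prodS φ (A ∆ {i}) * x * reverse (Q := Qf m) (prodS ψ (A ∆ {j}))) := by
      rw [smul_mul_assoc, smul_mul_assoc, mul_smul_comm, smul_smul]

-- chunk 6: the key combinatorial identity
lemma key_sum {m : ℕ} {φ ψ : Fin m → Fin m → ℝ} (hφ : IsStructuralSet φ)
    (hψ : IsStructuralSet ψ) (a : Fin m → Fin m → Cl m)
    (hsym : ∀ i j, a i j = a j i) (r : ℕ) :
    (∑ i, ∑ j, ι (Qf m) (φ i) *
        (∑ A ∈ Finset.univ.filter (fun A : Finset (Fin m) => A.card % 2 = r % 2),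
          prodS φ A * a i j * reverse (Q := Qf m) (prodS ψ A)) * ι (Qf m) (ψ j))
      = ∑ A ∈ Finset.univ.filter (fun A : Finset (Fin m) => ¬(A.card % 2 = r % 2)),
          prodS φ A * (∑ i, a i i) * reverse (Q := Qf m) (prodS ψ A) := by
  classical
  set s : Finset (Finset (Fin m)) :=
    Finset.univ.filter (fun A => A.card % 2 = r % 2) with hs
  set s' : Finset (Finset (Fin m)) :=
    Finset.univ.filter (fun A => ¬(A.card % 2 = r % 2)) with hs'
  set W : Fin m → Fin m → Finset (Fin m) → Cl m := fun i j A =>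
    (sg i A * sg j A) •
      (prodS φ (A ∆ {i}) * a i j * reverse (Q := Qf m) (prodS ψ (A ∆ {j}))) with hW
  have step1 : ∀ i j : Fin m,
      ι (Qf m) (φ i) *
        (∑ A ∈ s, prodS φ A * a i j * reverse (Q := Qf m) (prodS ψ A)) * ι (Qf m) (ψ j)
        = ∑ A ∈ s, W i j A := by
    intro i j
    rw [Finset.mul_sum, Finset.sum_mul]
    exact Finset.sum_congr rfl fun A _ => conj_term hφ hψ i j A (a i j)
  calc (∑ i, ∑ j, ι (Qf m) (φ i) *
        (∑ A ∈ s, prodS φ A * a i j * reverse (Q := Qf m) (prodS ψ A)) * ι (Qf m) (ψ j))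
      = ∑ i, ∑ j, ∑ A ∈ s, W i j A := by
        exact Finset.sum_congr rfl fun i _ => Finset.sum_congr rfl fun j _ => step1 i j
    _ = ∑ p ∈ (Finset.univ ×ˢ Finset.univ) ×ˢ s, W p.1.1 p.1.2 p.2 := by
        rw [Finset.sum_product, Finset.sum_product]
    _ = (∑ p ∈ ((Finset.univ ×ˢ Finset.univ) ×ˢ s).filter (fun p => p.1.1 = p.1.2),
          W p.1.1 p.1.2 p.2)
        + ∑ p ∈ ((Finset.univ ×ˢ Finset.univ) ×ˢ s).filter (fun p => ¬(p.1.1 = p.1.2)),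
          W p.1.1 p.1.2 p.2 := (Finset.sum_filter_add_sum_filter_not _ _ _).symm
    _ = ∑ p ∈ ((Finset.univ ×ˢ Finset.univ) ×ˢ s).filter (fun p => p.1.1 = p.1.2),
          W p.1.1 p.1.2 p.2 := by
        rw [add_eq_left]
        refine Finset.sum_involution
          (fun p _ => ((p.1.2, p.1.1), p.2 ∆ {p.1.1, p.1.2})) ?_ ?_ ?_ ?_
        · -- sums to zero
          rintro ⟨⟨i, j⟩, A⟩ hp
          simp only [Finset.mem_filter, Finset.mem_product] at hp
          have hij : i ≠ j := hp.2
          show W i j A + W j i (A ∆ {i, j}) = 0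
          rw [hW]
          simp only []
          rw [symmDiff_pair_first hij, symmDiff_pair_second hij, hsym j i,
            mul_comm (sg j (A ∆ {i, j})), sg_symmDiff_pair hij, neg_smul, add_neg_cancel]
        · -- g ≠ id
          rintro ⟨⟨i, j⟩, A⟩ hp _
          have hij : ¬ i = j := (Finset.mem_filter.mp hp).2
          exact fun hc => hij (Prod.ext_iff.mp (Prod.ext_iff.mp hc).1).2
        · -- membership
          rintro ⟨⟨i, j⟩, A⟩ hp
          have hp' := Finset.mem_filter.mp hp
          have hij : ¬ i = j := hp'.2
          have hA : A ∈ s := (Finset.mem_product.mp hp'.1).2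
          have hA2 : A ∆ {i, j} ∈ s := by
            rw [hs] at hA ⊢
            rw [Finset.mem_filter] at hA ⊢
            exact ⟨Finset.mem_univ _, by rw [card_symmDiff_pair hij]; exact hA.2⟩
          show ((j, i), A ∆ {i, j}) ∈ Finset.filter _ _
          refine Finset.mem_filter.mpr ⟨Finset.mem_product.mpr
            ⟨Finset.mem_product.mpr ⟨Finset.mem_univ _, Finset.mem_univ _⟩, hA2⟩, ?_⟩
          exact fun hc => hij hc.symm
        · -- involutive
          rintro ⟨⟨i, j⟩, A⟩ hp
          show ((i, j), (A ∆ {i, j}) ∆ {j, i}) = ((i, j), A)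
          rw [Finset.pair_comm j i, symmDiff_symmDiff_cancel_right]
    _ = ∑ q ∈ Finset.univ ×ˢ s, W q.1 q.1 q.2 := by
        apply Finset.sum_nbij' (i := fun p => (p.1.1, p.2)) (j := fun q => ((q.1, q.1), q.2))
        · rintro ⟨⟨i, j⟩, A⟩ hp
          have h := Finset.mem_filter.mp hp
          exact Finset.mem_product.mpr ⟨Finset.mem_univ _, (Finset.mem_product.mp h.1).2⟩
        · rintro ⟨i, A⟩ hq
          have h := (Finset.mem_product.mp hq).2
          exact Finset.mem_filter.mpr ⟨Finset.mem_product.mpr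
            ⟨Finset.mem_product.mpr ⟨Finset.mem_univ _, Finset.mem_univ _⟩, h⟩, rfl⟩
        · rintro ⟨⟨i, j⟩, A⟩ hp
          have h : i = j := (Finset.mem_filter.mp hp).2
          subst h; rfl
        · rintro ⟨i, A⟩ _; rfl
        · rintro ⟨⟨i, j⟩, A⟩ hp
          have h : i = j := (Finset.mem_filter.mp hp).2
          subst h; rfl
    _ = ∑ i, ∑ A ∈ s, W i i A := Finset.sum_product _ _ _
    _ = ∑ i, ∑ A ∈ s,
          prodS φ (A ∆ {i}) * a i i * reverse (Q := Qf m) (prodS ψ (A ∆ {i})) := by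
        refine Finset.sum_congr rfl fun i _ => Finset.sum_congr rfl fun A _ => ?_
        rw [hW]
        simp only []
        rw [sg_sq, one_smul]
    _ = ∑ i, ∑ B ∈ s', prodS φ B * a i i * reverse (Q := Qf m) (prodS ψ B) := by
        refine Finset.sum_congr rfl fun i _ => ?_
        apply Finset.sum_nbij' (i := fun A => A ∆ {i}) (j := fun B => B ∆ {i})
        · intro A hA
          simp only [hs, hs', Finset.mem_filter, Finset.mem_univ, true_and] at hA ⊢
          rw [card_symmDiff_singleton]
          omega
        · intro B hB
          simp only [hs, hs', Finset.mem_filter, Finset.mem_univ, true_and] at hB ⊢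
          rw [card_symmDiff_singleton]
          omega
        · intro A _; exact symmDiff_symmDiff_cancel_right _ _
        · intro B _; exact symmDiff_symmDiff_cancel_right _ _
        · intro A _; rfl
    _ = ∑ B ∈ s', prodS φ B * (∑ i, a i i) * reverse (Q := Qf m) (prodS ψ B) := by
        rw [Finset.sum_comm]
        refine Finset.sum_congr rfl fun B _ => ?_
        rw [Finset.mul_sum, Finset.sum_mul]

-- chunk 7: regrouping by cardinality
lemma regroup {m : ℕ} (p : ℕ → Prop) [DecidablePred p] (g : Finset (Fin m) → Cl m) :
    ∑ k ∈ (Finset.range (m + 1)).filter p,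
        ∑ A ∈ Finset.univ.filter (fun A : Finset (Fin m) => A.card = k), g A
      = ∑ A ∈ Finset.univ.filter (fun A : Finset (Fin m) => p A.card), g A := by
  have h1 : ∀ k, (if p k then ∑ A : Finset (Fin m), (if A.card = k then g A else 0) else 0)
      = ∑ A : Finset (Fin m), if p k ∧ A.card = k then g A else 0 := by
    intro k
    by_cases hpk : p k
    · rw [if_pos hpk]
      refine Finset.sum_congr rfl fun A _ => ?_
      by_cases hA : A.card = k <;> simp [hA, hpk]
    · rw [if_neg hpk]
      rw [eq_comm, Finset.sum_eq_zero]
      intro A _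
      rw [if_neg (fun hc => hpk hc.1)]
  have h2 : ∀ A : Finset (Fin m),
      (∑ k ∈ Finset.range (m + 1), if p k ∧ A.card = k then g A else 0)
        = if p A.card then g A else 0 := by
    intro A
    have hcard : A.card ≤ m := by
      have := Finset.card_le_univ A
      simpa using this
    rw [Finset.sum_eq_single A.card]
    · by_cases hp : p A.card <;> simp [hp]
    · intro k _ hk
      rw [if_neg (fun hc => hk hc.2.symm)]
    · intro hc
      exact absurd (Finset.mem_range.mpr (Nat.lt_succ_of_le hcard)) hc
  calc ∑ k ∈ (Finset.range (m + 1)).filter p,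
        ∑ A ∈ Finset.univ.filter (fun A : Finset (Fin m) => A.card = k), g A
      = ∑ k ∈ Finset.range (m + 1), if p k then
          ∑ A : Finset (Fin m), (if A.card = k then g A else 0) else 0 := by
        rw [Finset.sum_filter]
        refine Finset.sum_congr rfl fun k _ => ?_
        by_cases hp : p k
        · rw [if_pos hp, if_pos hp, Finset.sum_filter]
        · rw [if_neg hp, if_neg hp]
    _ = ∑ k ∈ Finset.range (m + 1), ∑ A : Finset (Fin m),
          if p k ∧ A.card = k then g A else 0 := Finset.sum_congr rfl fun k _ => h1 k
    _ = ∑ A : Finset (Fin m), ∑ k ∈ Finset.range (m + 1),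
          if p k ∧ A.card = k then g A else 0 := Finset.sum_comm
    _ = ∑ A : Finset (Fin m), if p A.card then g A else 0 :=
        Finset.sum_congr rfl fun A _ => h2 A
    _ = ∑ A ∈ Finset.univ.filter (fun A : Finset (Fin m) => p A.card), g A :=
        (Finset.sum_filter _ _).symm

-- chunk 8: Psi± as a single sum over subsets
lemma psiPlus_eq {m : ℕ} (φ ψ : Fin m → Fin m → ℝ) (x : Cl m) :
    PsiPlus φ ψ x
      = ∑ A ∈ Finset.univ.filter (fun A : Finset (Fin m) => A.card % 2 = 0 % 2),
          prodS φ A * x * reverse (prodS ψ A) := by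
  unfold PsiPlus PsiK
  rw [regroup]
  apply Finset.sum_congr _ fun A _ => rfl
  apply Finset.filter_congr
  intro A _
  simp [Nat.even_iff]

lemma psiMinus_eq {m : ℕ} (φ ψ : Fin m → Fin m → ℝ) (x : Cl m) :
    PsiMinus φ ψ x
      = ∑ A ∈ Finset.univ.filter (fun A : Finset (Fin m) => ¬(A.card % 2 = 0 % 2)),
          prodS φ A * x * reverse (prodS ψ A) := by
  unfold PsiMinus PsiK
  rw [regroup]
  apply Finset.sum_congr _ fun A _ => rfl
  apply Finset.filter_congr
  intro A _
  simp [Nat.odd_iff]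

lemma psiMinus_eq' {m : ℕ} (φ ψ : Fin m → Fin m → ℝ) (x : Cl m) :
    PsiMinus φ ψ x
      = ∑ A ∈ Finset.univ.filter (fun A : Finset (Fin m) => A.card % 2 = 1 % 2),
          prodS φ A * x * reverse (prodS ψ A) := by
  unfold PsiMinus PsiK
  rw [regroup]
  apply Finset.sum_congr _ fun A _ => rfl
  apply Finset.filter_congr
  intro A _
  simp [Nat.odd_iff]

lemma psiPlus_eq' {m : ℕ} (φ ψ : Fin m → Fin m → ℝ) (x : Cl m) :
    PsiPlus φ ψ x
      = ∑ A ∈ Finset.univ.filter (fun A : Finset (Fin m) => ¬(A.card % 2 = 1 % 2)),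
          prodS φ A * x * reverse (prodS ψ A) := by
  unfold PsiPlus PsiK
  rw [regroup]
  apply Finset.sum_congr _ fun A _ => rfl
  apply Finset.filter_congr
  intro A _
  simp [Nat.even_iff]

-- chunk 9: symmetry of second derivatives
lemma pd_symm {m : ℕ} {Ω : Set (Fin m → ℝ)} (hΩo : IsOpen Ω)
    {F : (Fin m → ℝ) → Coef m} (hF : ContDiffOn ℝ 2 F Ω)
    {x : Fin m → ℝ} (hx : x ∈ Ω) (i j : Fin m) :
    pd i (pd j F) x = pd j (pd i F) x := by
  have hx2 : ContDiffAt ℝ 2 F x := hF.contDiffAt (hΩo.mem_nhds hx)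
  have hsymm : IsSymmSndFDerivAt ℝ F x := hx2.isSymmSndFDerivAt (by simp)
  have hdiff : DifferentiableAt ℝ (fderiv ℝ F) x := by
    have h1 : ContDiffAt ℝ 1 (fderiv ℝ F) x := hx2.fderiv_right (by norm_num)
    exact h1.differentiableAt one_ne_zero
  have e : ∀ v w : Fin m → ℝ,
      fderiv ℝ (fun y => fderiv ℝ F y v) x w = fderiv ℝ (fderiv ℝ F) x w v := by
    intro v w
    rw [fderiv_clm_apply hdiff (differentiableAt_const v)]
    simp
  show fderiv ℝ (pd j F) x (Pi.single i 1) = fderiv ℝ (pd i F) x (Pi.single j 1)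
  have hj : pd j F = fun y => fderiv ℝ F y (Pi.single j 1) := rfl
  have hi : pd i F = fun y => fderiv ℝ F y (Pi.single i 1) := rfl
  rw [hj, hi, e, e]
  exact hsymm (Pi.single i 1) (Pi.single j 1)

/-- for C²-smooth `f : Ω → ℝ_{0,m}`,
`φ∂[Ψ₊^{φ,ψ}(f)]ψ∂ = Ψ₋^{φ,ψ}(Δf)` and `φ∂[Ψ₋^{φ,ψ}(f)]ψ∂ = Ψ₊^{φ,ψ}(Δf)`.
(By linearity of `Ψ_±`, the left-hand sides are `Σᵢⱼ φⁱ Ψ_±(∂²f/∂xᵢ∂xⱼ) ψʲ`.) -/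
theorem sandwich_psiPlusMinus {m : ℕ} (φ ψ : Fin m → (Fin m → ℝ))
    (hφ : IsStructuralSet φ) (hψ : IsStructuralSet ψ)
    (Ω : Set (Fin m → ℝ)) (hΩo : IsOpen Ω) (hΩc : IsConnected Ω)
    (F : (Fin m → ℝ) → Coef m) (hF : ContDiffOn ℝ 2 F Ω) :
    (∀ x ∈ Ω,
      (∑ i, ∑ j, ι (Qf m) (φ i) * PsiPlus φ ψ (toCl (pd i (pd j F) x)) * ι (Qf m) (ψ j))
        = PsiMinus φ ψ (lapD F x)) ∧
    (∀ x ∈ Ω,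
      (∑ i, ∑ j, ι (Qf m) (φ i) * PsiMinus φ ψ (toCl (pd i (pd j F) x)) * ι (Qf m) (ψ j))
        = PsiPlus φ ψ (lapD F x)) := by
  constructor
  · intro x hx
    have hsym : ∀ i j : Fin m, toCl (pd i (pd j F) x) = toCl (pd j (pd i F) x) :=
      fun i j => by rw [pd_symm hΩo hF hx i j]
    have hkey := key_sum hφ hψ (fun i j => toCl (pd i (pd j F) x)) hsym 0
    calc (∑ i, ∑ j, ι (Qf m) (φ i) * PsiPlus φ ψ (toCl (pd i (pd j F) x)) * ι (Qf m) (ψ j))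
        = ∑ i, ∑ j, ι (Qf m) (φ i) *
            (∑ A ∈ Finset.univ.filter (fun A : Finset (Fin m) => A.card % 2 = 0 % 2),
              prodS φ A * toCl (pd i (pd j F) x) * reverse (prodS ψ A)) * ι (Qf m) (ψ j) := by
          exact Finset.sum_congr rfl fun i _ => Finset.sum_congr rfl fun j _ => by
            rw [psiPlus_eq]
      _ = ∑ A ∈ Finset.univ.filter (fun A : Finset (Fin m) => ¬(A.card % 2 = 0 % 2)),
            prodS φ A * (∑ i, toCl (pd i (pd i F) x)) * reverse (prodS ψ A) := hkey
      _ = PsiMinus φ ψ (lapD F x) := by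
          rw [psiMinus_eq]
          rfl
  · intro x hx
    have hsym : ∀ i j : Fin m, toCl (pd i (pd j F) x) = toCl (pd j (pd i F) x) :=
      fun i j => by rw [pd_symm hΩo hF hx i j]
    have hkey := key_sum hφ hψ (fun i j => toCl (pd i (pd j F) x)) hsym 1
    calc (∑ i, ∑ j, ι (Qf m) (φ i) * PsiMinus φ ψ (toCl (pd i (pd j F) x)) * ι (Qf m) (ψ j))
        = ∑ i, ∑ j, ι (Qf m) (φ i) *
            (∑ A ∈ Finset.univ.filter (fun A : Finset (Fin m) => A.card % 2 = 1 % 2),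
              prodS φ A * toCl (pd i (pd j F) x) * reverse (prodS ψ A)) * ι (Qf m) (ψ j) := by
          exact Finset.sum_congr rfl fun i _ => Finset.sum_congr rfl fun j _ => by
            rw [psiMinus_eq']
      _ = ∑ A ∈ Finset.univ.filter (fun A : Finset (Fin m) => ¬(A.card % 2 = 1 % 2)),
            prodS φ A * (∑ i, toCl (pd i (pd i F) x)) * reverse (prodS ψ A) := hkey
      _ = PsiPlus φ ψ (lapD F x) := by
          rw [psiPlus_eq']
          rfl
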